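/- For a real-valued random variable X with continuous c.d.f. F and finite expectation, and i.i.d. copies X_1,...,X_i of X, the probability weighted moment β_i = E[X·F(X)^{i-1}] satisfies β_i = (1/i)·E[max(X_1,...,X_i)] for each i ≥ 1. -/

import Mathlib

open MeasureTheory ProbabilityTheory Set

/-- For a real random variable `X0` with continuous c.d.f. `F` and finite expectation,
and i.i.d. copies `X 0, ..., X (i-1)` of `X0`, the probability weighted moment
`β_i = E[X · F(X)^(i-1)]` satisfies `β_i = (1/i) · E[max(X_1,...,X_i)]`. -/
theorem pwm_eq_inv_mul_expectation_max
    {Ω : Type*} [MeasureSpace Ω] [IsProbabilityMeasure (ℙ : Measure Ω)]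
    (i : ℕ) (hi : 1 ≤ i)
    (X : Fin i → Ω → ℝ) (X0 : Ω → ℝ)
    (hX0meas : Measurable X0)
    (hXmeas : ∀ j, Measurable (X j))
    (hindep : iIndepFun X ℙ)
    (hident : ∀ j, IdentDistrib (X j) X0 ℙ ℙ)
    (F : ℝ → ℝ)
    (hF : ∀ x, F x = (ℙ {ω | X0 ω ≤ x}).toReal)
    (hFcont : Continuous F)
    (hint : Integrable X0 ℙ) :
    ∫ ω, X0 ω * (F (X0 ω)) ^ (i - 1) ∂ℙ
      = (1 / (i : ℝ)) * ∫ ω, ⨆ j, X j ω ∂ℙ := by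
  classical
  obtain ⟨n, rfl⟩ : ∃ n, i = n + 1 := ⟨i - 1, (Nat.succ_pred_eq_of_pos hi).symm⟩
  set μ : Measure ℝ := Measure.map X0 ℙ with hμ
  have hμprob : IsProbabilityMeasure μ := Measure.isProbabilityMeasure_map hX0meas.aemeasurable
  have hFμ : ∀ x, F x = (μ (Iic x)).toReal := by
    intro x
    rw [hF x, hμ, Measure.map_apply hX0meas measurableSet_Iic]
    rfl
  -- μ has no atoms
  have hatom : ∀ x : ℝ, μ {x} = 0 := by
    intro x
    have h1 : ∀ y ∈ Iio x, (μ {x}).toReal ≤ F x - F y := by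
      intro y hy
      have hy : y < x := hy
      have hsub : ({x} : Set ℝ) ⊆ Ioc y x := by
        intro z hz; rw [Set.mem_singleton_iff] at hz; subst hz; exact ⟨hy, le_rfl⟩
      have hle : μ {x} ≤ μ (Ioc y x) := measure_mono hsub
      have h2 : (μ (Ioc y x)).toReal = F x - F y := by
        rw [hFμ, hFμ, ← ENNReal.toReal_sub_of_le
          (measure_mono (Iic_subset_Iic.mpr hy.le)) (measure_ne_top _ _)]
        congr 1
        rw [← Set.Iic_sdiff_Iic,
          measure_diff (Iic_subset_Iic.mpr hy.le) measurableSet_Iic.nullMeasurableSet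
            (measure_ne_top _ _)]
      calc (μ {x}).toReal ≤ (μ (Ioc y x)).toReal :=
              ENNReal.toReal_mono (measure_ne_top _ _) hle
        _ = F x - F y := h2
    have hlim : Filter.Tendsto (fun y => F x - F y) (nhdsWithin x (Iio x)) (nhds 0) := by
      have : Filter.Tendsto (fun y => F x - F y) (nhds x) (nhds (F x - F x)) :=
        (continuous_const.sub hFcont).tendsto x
      rw [sub_self] at this
      exact this.mono_left nhdsWithin_le_nhds
    have hto : (μ {x}).toReal ≤ 0 :=
      ge_of_tendsto hlim (eventually_nhdsWithin_of_forall h1)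
    have h0 : (μ {x}).toReal = 0 := le_antisymm hto ENNReal.toReal_nonneg
    have := (ENNReal.toReal_eq_zero_iff _).mp h0
    rcases this with h | h
    · exact h
    · exact absurd h (measure_ne_top _ _)
  -- joint law is the product measure
  set π : Measure (Fin (n + 1) → ℝ) := Measure.pi (fun _ => μ) with hπ
  have hmeasX : Measurable (fun ω (j : Fin (n + 1)) => X j ω) := measurable_pi_iff.mpr hXmeas
  have hmap : ∀ (j) (s : Set ℝ), MeasurableSet s → ℙ (X j ⁻¹' s) = μ s := by
    intro j s hs
    rw [hμ, ← (hident j).map_eq, Measure.map_apply (hXmeas j) hs]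
  have hjoint : π = Measure.map (fun ω j => X j ω) ℙ := by
    refine Measure.pi_eq ?_
    intro s hs
    rw [Measure.map_apply hmeasX (MeasurableSet.univ_pi hs)]
    have hpre : (fun ω j => X j ω) ⁻¹' (Set.pi Set.univ s) = ⋂ j ∈ Finset.univ, X j ⁻¹' s j := by
      ext ω; simp [Set.mem_pi]
    rw [hpre, hindep.measure_inter_preimage_eq_mul Finset.univ (fun j _ => hs j)]
    exact Finset.prod_congr rfl fun j _ => hmap j (s j) (hs j)
  set π' : Measure (Fin n → ℝ) := Measure.pi (fun _ => μ) with hπ'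
  set e : ∀ k : Fin (n + 1), (Fin (n + 1) → ℝ) ≃ᵐ ℝ × (Fin n → ℝ) :=
    fun k => MeasurableEquiv.piFinSuccAbove (fun _ => ℝ) k with he
  have MP : ∀ k, MeasurePreserving (e k) π (μ.prod π') :=
    fun k => measurePreserving_piFinSuccAbove (fun _ => μ) k
  -- the summands
  set g : Fin (n + 1) → (Fin (n + 1) → ℝ) → ℝ :=
    fun k x => x k * ∏ m : Fin n, (if x (k.succAbove m) ≤ x k then (1:ℝ) else 0) with hg
  set h : ℝ × (Fin n → ℝ) → ℝ :=
    fun p => p.1 * ∏ m : Fin n, (if p.2 m ≤ p.1 then (1:ℝ) else 0) with hh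
  have hcomp : ∀ k x, g k x = h (e k x) := by
    intro k x
    simp [hg, hh, he, MeasurableEquiv.piFinSuccAbove_apply, Fin.insertNthEquiv_symm_apply, Fin.removeNth]
    exact Or.inl rfl
  have hhmeas : Measurable h := by
    apply Measurable.mul measurable_fst
    apply Finset.measurable_prod
    intro m _
    exact Measurable.ite
      (measurableSet_le (measurable_snd.eval) measurable_fst)
      measurable_const measurable_const
  have hgmeas : ∀ k, Measurable (g k) := by
    intro k
    have : g k = h ∘ (e k) := funext fun x => hcomp k x
    rw [this]
    exact hhmeas.comp (e k).measurable
  -- integrability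
  have hIntId : Integrable (fun x : ℝ => x) μ := by
    rw [hμ]
    exact (integrable_map_measure aestronglyMeasurable_id hX0meas.aemeasurable).mpr hint
  have hmapfst : Measure.map Prod.fst (μ.prod π') = μ := by
    rw [Measure.map_fst_prod]; simp
  have hfst : Integrable (fun p : ℝ × (Fin n → ℝ) => p.1) (μ.prod π') := by
    have := (integrable_map_measure aestronglyMeasurable_id
      measurable_fst.aemeasurable).mp (by rwa [hmapfst] : Integrable (fun x : ℝ => x)
        (Measure.map Prod.fst (μ.prod π')))
    exact this
  have hprod_mem : ∀ (a : ℝ) (y : Fin n → ℝ),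
      (0:ℝ) ≤ (∏ m : Fin n, if y m ≤ a then (1:ℝ) else 0) ∧
      (∏ m : Fin n, if y m ≤ a then (1:ℝ) else 0) ≤ 1 := by
    intro a y
    constructor
    · exact Finset.prod_nonneg fun m _ => by positivity
    · exact Finset.prod_le_one (fun m _ => by positivity) (fun m _ => by split <;> norm_num)
  have hInth : Integrable h (μ.prod π') := by
    refine hfst.norm.mono' hhmeas.aestronglyMeasurable (Filter.Eventually.of_forall fun p => ?_)
    rw [hh]
    simp only [Real.norm_eq_abs, abs_mul]
    obtain ⟨h0, h1⟩ := hprod_mem p.1 p.2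
    calc |p.1| * |∏ m : Fin n, if p.2 m ≤ p.1 then (1:ℝ) else 0|
        = |p.1| * (∏ m : Fin n, if p.2 m ≤ p.1 then (1:ℝ) else 0) := by rw [abs_of_nonneg h0]
      _ ≤ |p.1| * 1 := by gcongr
      _ = |p.1| := mul_one _
  have hxk : ∀ k, Integrable (fun x : Fin (n + 1) → ℝ => x k) π := by
    intro k
    have heq : (fun x : Fin (n + 1) → ℝ => x k) = (fun p : ℝ × (Fin n → ℝ) => p.1) ∘ (e k) := by
      funext x
      simp [he, MeasurableEquiv.piFinSuccAbove_apply, Fin.insertNthEquiv_symm_apply]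
    rw [heq]
    exact ((MP k).integrable_comp_emb (e k).measurableEmbedding).mpr hfst
  have hgint : ∀ k, Integrable (g k) π := by
    intro k
    refine (hxk k).norm.mono' (hgmeas k).aestronglyMeasurable (Filter.Eventually.of_forall fun x => ?_)
    rw [hg]
    simp only [Real.norm_eq_abs, abs_mul]
    obtain ⟨h0, h1⟩ := hprod_mem (x k) (fun m => x (k.succAbove m))
    calc |x k| * |∏ m : Fin n, if x (k.succAbove m) ≤ x k then (1:ℝ) else 0|
        = |x k| * (∏ m : Fin n, if x (k.succAbove m) ≤ x k then (1:ℝ) else 0) := by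
          rw [abs_of_nonneg h0]
      _ ≤ |x k| * 1 := by gcongr
      _ = |x k| := mul_one _
  -- value of each summand integral
  have hinner : ∀ a : ℝ, ∫ y, h (a, y) ∂π' = a * (F a) ^ n := by
    intro a
    have hfun : (fun y : Fin n → ℝ => (∏ m : Fin n, if y m ≤ a then (1:ℝ) else 0))
        = Set.indicator (Set.pi Set.univ fun _ : Fin n => Iic a) (fun _ => (1:ℝ)) := by
      funext y
      have hiff : (y ∈ Set.pi Set.univ fun _ : Fin n => Iic a) ↔ ∀ m, y m ≤ a := by
        simp only [Set.mem_pi, Set.mem_univ, Set.mem_Iic, forall_true_left]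
      by_cases hy : ∀ m : Fin n, y m ≤ a
      · rw [Set.indicator_of_mem (hiff.mpr hy)]
        exact Finset.prod_eq_one fun m _ => if_pos (hy m)
      · rw [Set.indicator_of_notMem (fun hmem => hy (hiff.mp hmem))]
        push_neg at hy
        obtain ⟨m, hm⟩ := hy
        exact Finset.prod_eq_zero (Finset.mem_univ m) (if_neg (not_le.mpr hm))
    simp only [hh]
    rw [integral_const_mul, hfun, integral_indicator_const (1:ℝ)
      (MeasurableSet.univ_pi fun _ => measurableSet_Iic)]
    rw [hπ', measureReal_def, Measure.pi_pi]
    simp [hFμ a, ENNReal.toReal_pow]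
  have hgk : ∀ k, ∫ x, g k x ∂π = ∫ a, a * (F a) ^ n ∂μ := by
    intro k
    have h1 : ∫ x, g k x ∂π = ∫ p, h p ∂(μ.prod π') := by
      rw [← (MP k).integral_comp']
      exact integral_congr_ae (Filter.Eventually.of_forall fun x => hcomp k x)
    rw [h1, integral_prod h hInth]
    exact integral_congr_ae (Filter.Eventually.of_forall fun a => hinner a)
  -- the a.e. identity ∑ k, g k = sup
  have hpair : ∀ j k : Fin (n + 1), j ≠ k → π {x | x j = x k} = 0 := by
    intro j k hjk
    obtain ⟨m0, hm0⟩ := Fin.exists_succAbove_eq hjk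
    set T : Set (ℝ × (Fin n → ℝ)) := {p | p.2 m0 = p.1} with hT
    have hTmeas : MeasurableSet T :=
      measurableSet_eq_fun (measurable_snd.eval) measurable_fst
    have hpre : (e k) ⁻¹' T = {x | x j = x k} := by
      ext x
      simp [hT, he, MeasurableEquiv.piFinSuccAbove_apply, Fin.insertNthEquiv_symm_apply, Fin.removeNth, hm0]
    have hval : (μ.prod π') T = 0 := by
      rw [Measure.prod_apply hTmeas]
      have : ∀ a : ℝ, π' (Prod.mk a ⁻¹' T) = 0 := by
        intro a
        have : Prod.mk a ⁻¹' T = Function.eval m0 ⁻¹' ({a} : Set ℝ) := by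
          ext y; simp [hT, eq_comm]
        rw [this, hπ']
        exact Measure.pi_eval_preimage_null _ (hatom a)
      simp [this]
    have h2 := (MP k).measure_preimage (μa := π) hTmeas.nullMeasurableSet
    rw [hpre] at h2
    exact h2.trans hval
  set B : Set (Fin (n + 1) → ℝ) :=
    ⋃ (k : Fin (n + 1)) (j : Fin (n + 1)) (_ : j ≠ k), {x | x j = x k} with hB
  have hBnull : π B = 0 := by
    refine measure_iUnion_null fun k => measure_iUnion_null fun j => measure_iUnion_null fun hjk =>
      hpair j k hjk
  have hptwise : ∀ x ∉ B, (∑ k : Fin (n + 1), g k x) = ⨆ j, x j := by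
    intro x hx
    have hdist : ∀ j k : Fin (n + 1), j ≠ k → x j ≠ x k := by
      intro j k hjk heq
      exact hx (Set.mem_iUnion.mpr ⟨k, Set.mem_iUnion.mpr ⟨j, Set.mem_iUnion.mpr ⟨hjk, heq⟩⟩⟩)
    obtain ⟨k0, -, hk0⟩ := Finset.exists_max_image Finset.univ x Finset.univ_nonempty
    have hk0' : ∀ j, x j ≤ x k0 := fun j => hk0 j (Finset.mem_univ j)
    have hsup : (⨆ j, x j) = x k0 :=
      le_antisymm (ciSup_le hk0') (le_ciSup (Set.Finite.bddAbove (Set.finite_range x)) k0)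
    rw [hsup]
    rw [Finset.sum_eq_single_of_mem k0 (Finset.mem_univ k0)]
    · rw [hg]
      simp only []
      rw [Finset.prod_eq_one fun m _ => if_pos (hk0' (k0.succAbove m)), mul_one]
    · intro k _ hk
      obtain ⟨m, hm⟩ := Fin.exists_succAbove_eq (Ne.symm hk)
      have hlt : x k < x k0 := lt_of_le_of_ne (hk0' k) (hdist k k0 hk)
      rw [hg]
      simp only []
      rw [Finset.prod_eq_zero (Finset.mem_univ m) (by rw [hm]; exact if_neg (not_le.mpr hlt)),
        mul_zero]
  have hae : (fun x => ∑ k : Fin (n + 1), g k x) =ᵐ[π] fun x => ⨆ j, x j := by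
    refine Filter.eventuallyEq_of_mem ?_ hptwise
    refine (mem_ae_iff (s := {x | x ∉ B})).mpr ?_
    refine measure_mono_null ?_ hBnull
    intro x hx
    exact not_not.mp hx
  -- putting things together
  have hsupint : ∫ x, (⨆ j, x j) ∂π = ((n : ℝ) + 1) * ∫ a, a * (F a) ^ n ∂μ := by
    rw [← integral_congr_ae hae, integral_finset_sum Finset.univ (fun k _ => hgint k)]
    simp only [hgk]
    rw [Finset.sum_const, Finset.card_univ, Fintype.card_fin, nsmul_eq_mul]
    push_cast
    ring
  have hsupmeas : Measurable (fun x : Fin (n + 1) → ℝ => ⨆ j, x j) :=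
    Measurable.iSup fun j => measurable_pi_apply j
  have hRHS : ∫ ω, (⨆ j, X j ω) ∂ℙ = ∫ x, (⨆ j, x j) ∂π := by
    rw [hjoint, integral_map hmeasX.aemeasurable hsupmeas.aestronglyMeasurable]
  have hLHS : ∫ ω, X0 ω * F (X0 ω) ^ (n + 1 - 1) ∂ℙ = ∫ a, a * (F a) ^ n ∂μ := by
    simp only [Nat.add_sub_cancel]
    rw [hμ, integral_map (f := fun a => a * F a ^ n) hX0meas.aemeasurable
      ((continuous_id'.mul (hFcont.pow n)).aestronglyMeasurable)]
  rw [hLHS, hRHS, hsupint]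
  have hne : ((n : ℝ) + 1) ≠ 0 := by positivity
  push_cast
  rw [one_div, inv_mul_cancel_left₀ hne]
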